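/- For constants c1, c2, c3, c4 ∈ ℝ and γ > 0, the function ψ(x,y,t) = c1 + c2(x²+y²) + c3·ln(x²+y²) + c4·(x²+y²)(ln(x²+y²) − 1) + (x²+y²)²/(32γ) + (t/2)(x²+y²), defined for (x,y) ≠ (0,0), satisfies the 2+1 dimensional Navier–Stokes stream-function equation ψ_xxt + ψ_yyt + ψ_x(ψ_xxy + ψ_yyy) − ψ_y(ψ_xxx + ψ_xyy) − γ(ψ_xxxx + 2ψ_xxyy + ψ_yyyy) = 0. -/

import Mathlib

/-- Partial derivatives for functions of `(x, y, t) : ℝ × ℝ × ℝ`. -/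
noncomputable def Dx (f : ℝ × ℝ × ℝ → ℝ) : ℝ × ℝ × ℝ → ℝ :=
  fun p => fderiv ℝ f p (1, 0, 0)

noncomputable def Dy (f : ℝ × ℝ × ℝ → ℝ) : ℝ × ℝ × ℝ → ℝ :=
  fun p => fderiv ℝ f p (0, 1, 0)

noncomputable def Dt (f : ℝ × ℝ × ℝ → ℝ) : ℝ × ℝ × ℝ → ℝ :=
  fun p => fderiv ℝ f p (0, 0, 1)


noncomputable def P1' : ℝ × ℝ × ℝ →L[ℝ] ℝ := ContinuousLinearMap.fst ℝ ℝ (ℝ × ℝ)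
noncomputable def P2' : ℝ × ℝ × ℝ →L[ℝ] ℝ :=
  (ContinuousLinearMap.fst ℝ ℝ ℝ).comp (ContinuousLinearMap.snd ℝ ℝ (ℝ × ℝ))
noncomputable def P3' : ℝ × ℝ × ℝ →L[ℝ] ℝ :=
  (ContinuousLinearMap.snd ℝ ℝ ℝ).comp (ContinuousLinearMap.snd ℝ ℝ (ℝ × ℝ))
noncomputable def Lmk (a b c : ℝ) : ℝ × ℝ × ℝ →L[ℝ] ℝ := a • P1' + b • P2' + c • P3'

@[simp] lemma Lmk_apply (a b c : ℝ) (w : ℝ × ℝ × ℝ) :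
    Lmk a b c w = a * w.1 + b * w.2.1 + c * w.2.2 := by
  simp [Lmk, P1', P2', P3', smul_eq_mul]

lemma hasFDerivAt_X (p : ℝ × ℝ × ℝ) : HasFDerivAt (fun q : ℝ × ℝ × ℝ => q.1) P1' p :=
  hasFDerivAt_fst
lemma hasFDerivAt_Y (p : ℝ × ℝ × ℝ) : HasFDerivAt (fun q : ℝ × ℝ × ℝ => q.2.1) P2' p :=
  hasFDerivAt_fst.comp p hasFDerivAt_snd
lemma hasFDerivAt_T (p : ℝ × ℝ × ℝ) : HasFDerivAt (fun q : ℝ × ℝ × ℝ => q.2.2) P3' p :=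
  hasFDerivAt_snd.comp p hasFDerivAt_snd

lemma masterND {g : ℝ → ℝ} {g' : ℝ} (i j k : ℕ) {p : ℝ × ℝ × ℝ}
    (hg : HasDerivAt g g' (p.1 ^ 2 + p.2.1 ^ 2)) :
    HasFDerivAt (fun q : ℝ × ℝ × ℝ => q.1 ^ i * q.2.1 ^ j * q.2.2 ^ k * g (q.1 ^ 2 + q.2.1 ^ 2))
      (Lmk (↑i * p.1 ^ (i - 1) * p.2.1 ^ j * p.2.2 ^ k * g (p.1 ^ 2 + p.2.1 ^ 2)
              + p.1 ^ i * p.2.1 ^ j * p.2.2 ^ k * g' * (2 * p.1))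
           (↑j * p.1 ^ i * p.2.1 ^ (j - 1) * p.2.2 ^ k * g (p.1 ^ 2 + p.2.1 ^ 2)
              + p.1 ^ i * p.2.1 ^ j * p.2.2 ^ k * g' * (2 * p.2.1))
           (↑k * p.1 ^ i * p.2.1 ^ j * p.2.2 ^ (k - 1) * g (p.1 ^ 2 + p.2.1 ^ 2))) p := by
  have hx := (hasDerivAt_pow i p.1).comp_hasFDerivAt p (hasFDerivAt_X p)
  have hy := (hasDerivAt_pow j p.2.1).comp_hasFDerivAt p (hasFDerivAt_Y p)
  have ht := (hasDerivAt_pow k p.2.2).comp_hasFDerivAt p (hasFDerivAt_T p)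
  have hR := ((hasDerivAt_pow 2 p.1).comp_hasFDerivAt p (hasFDerivAt_X p)).add
    ((hasDerivAt_pow 2 p.2.1).comp_hasFDerivAt p (hasFDerivAt_Y p))
  have hg2 := hg.comp_hasFDerivAt p hR
  have H := ((hx.mul hy).mul ht).mul hg2
  refine H.congr_fderiv ?_
  refine ContinuousLinearMap.ext fun w => ?_
  simp [Lmk, P1', P2', P3', smul_eq_mul, Function.comp]
  ring

lemma hasFDerivAt_congrU {f g : ℝ × ℝ × ℝ → ℝ} {L : ℝ × ℝ × ℝ →L[ℝ] ℝ} {p : ℝ × ℝ × ℝ}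
    (h : HasFDerivAt f L p) (he : ∀ x, f x = g x) : HasFDerivAt g L p :=
  (funext he : f = g) ▸ h

lemma Dx_eq {f : ℝ × ℝ × ℝ → ℝ} {a b c : ℝ} {p : ℝ × ℝ × ℝ}
    (h : HasFDerivAt f (Lmk a b c) p) : Dx f p = a := by
  simp [Dx, h.fderiv]
lemma Dy_eq {f : ℝ × ℝ × ℝ → ℝ} {a b c : ℝ} {p : ℝ × ℝ × ℝ}
    (h : HasFDerivAt f (Lmk a b c) p) : Dy f p = b := by
  simp [Dy, h.fderiv]

lemma Dt_eq {f : ℝ × ℝ × ℝ → ℝ} {a b c : ℝ} {p : ℝ × ℝ × ℝ}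
    (h : HasFDerivAt f (Lmk a b c) p) : Dt f p = c := by
  simp [Dt, h.fderiv]

lemma isOpen_U : IsOpen {q : ℝ × ℝ × ℝ | q.1 ^ 2 + q.2.1 ^ 2 ≠ 0} :=
  IsOpen.preimage (by fun_prop) isOpen_compl_singleton

lemma fderiv_congrU {f g : ℝ × ℝ × ℝ → ℝ}
    (h : ∀ q : ℝ × ℝ × ℝ, q.1 ^ 2 + q.2.1 ^ 2 ≠ 0 → f q = g q)
    {p : ℝ × ℝ × ℝ} (hp : p.1 ^ 2 + p.2.1 ^ 2 ≠ 0) : fderiv ℝ f p = fderiv ℝ g p := by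
  have hev : f =ᶠ[nhds p] g := Filter.eventuallyEq_of_mem (isOpen_U.mem_nhds hp) h
  exact hev.fderiv_eq

lemma Dx_congrU {f g : ℝ × ℝ × ℝ → ℝ}
    (h : ∀ q : ℝ × ℝ × ℝ, q.1 ^ 2 + q.2.1 ^ 2 ≠ 0 → f q = g q)
    {p : ℝ × ℝ × ℝ} (hp : p.1 ^ 2 + p.2.1 ^ 2 ≠ 0) : Dx f p = Dx g p := by
  simp [Dx, fderiv_congrU h hp]

lemma Dy_congrU {f g : ℝ × ℝ × ℝ → ℝ}
    (h : ∀ q : ℝ × ℝ × ℝ, q.1 ^ 2 + q.2.1 ^ 2 ≠ 0 → f q = g q)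
    {p : ℝ × ℝ × ℝ} (hp : p.1 ^ 2 + p.2.1 ^ 2 ≠ 0) : Dy f p = Dy g p := by
  simp [Dy, fderiv_congrU h hp]

lemma Dt_congrU {f g : ℝ × ℝ × ℝ → ℝ}
    (h : ∀ q : ℝ × ℝ × ℝ, q.1 ^ 2 + q.2.1 ^ 2 ≠ 0 → f q = g q)
    {p : ℝ × ℝ × ℝ} (hp : p.1 ^ 2 + p.2.1 ^ 2 ≠ 0) : Dt f p = Dt g p := by
  simp [Dt, fderiv_congrU h hp]

noncomputable def auxA (c2 c3 c4 γ s : ℝ) : ℝ :=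
  c2 + c3 * s⁻¹ + c4 * Real.log s + s / (16 * γ)
noncomputable def auxB (c3 c4 γ s : ℝ) : ℝ :=
  -c3 * (s ^ 2)⁻¹ + c4 * s⁻¹ + 1 / (16 * γ)
noncomputable def auxC (c3 c4 s : ℝ) : ℝ := 2 * c3 * (s ^ 3)⁻¹ - c4 * (s ^ 2)⁻¹
noncomputable def auxD (c3 c4 s : ℝ) : ℝ := -6 * c3 * (s ^ 4)⁻¹ + 2 * c4 * (s ^ 3)⁻¹

lemma hasDerivAt_auxG0 (c1 c2 c3 c4 γ : ℝ) {s : ℝ} (hs : s ≠ 0) :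
    HasDerivAt (fun s : ℝ => c1 + c2 * s + c3 * Real.log s
      + c4 * s * (Real.log s - 1) + s ^ 2 / (32 * γ)) (auxA c2 c3 c4 γ s) s := by
  have H := ((((hasDerivAt_const s c1).add ((hasDerivAt_id s).const_mul c2)).add
      ((Real.hasDerivAt_log hs).const_mul c3)).add
      (((hasDerivAt_id s).const_mul c4).mul ((Real.hasDerivAt_log hs).sub_const 1))).add
      ((hasDerivAt_pow 2 s).div_const (32 * γ))
  refine H.congr_deriv ?_
  unfold auxA
  simp only [id_eq]
  field_simp
  ring

lemma hasDerivAt_auxA (c2 c3 c4 γ : ℝ) {s : ℝ} (hs : s ≠ 0) :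
    HasDerivAt (fun s => auxA c2 c3 c4 γ s) (auxB c3 c4 γ s) s := by
  unfold auxA auxB
  have H := (((hasDerivAt_const s c2).add ((hasDerivAt_inv hs).const_mul c3)).add
      ((Real.hasDerivAt_log hs).const_mul c4)).add ((hasDerivAt_id s).div_const (16 * γ))
  refine H.congr_deriv ?_
  ring

lemma hasDerivAt_auxB (c3 c4 γ : ℝ) {s : ℝ} (hs : s ≠ 0) :
    HasDerivAt (fun s => auxB c3 c4 γ s) (auxC c3 c4 s) s := by
  unfold auxB auxC
  have h2 : (s : ℝ) ^ 2 ≠ 0 := pow_ne_zero _ hs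
  have H := ((((hasDerivAt_pow 2 s).inv h2).const_mul (-c3)).add
      ((hasDerivAt_inv hs).const_mul c4)).add (hasDerivAt_const s (1 / (16 * γ)))
  refine H.congr_deriv ?_
  field_simp
  ring

lemma hasDerivAt_auxC (c3 c4 : ℝ) {s : ℝ} (hs : s ≠ 0) :
    HasDerivAt (fun s => auxC c3 c4 s) (auxD c3 c4 s) s := by
  unfold auxC auxD
  have h2 : (s : ℝ) ^ 2 ≠ 0 := pow_ne_zero _ hs
  have h3 : (s : ℝ) ^ 3 ≠ 0 := pow_ne_zero _ hs
  have H := (((hasDerivAt_pow 3 s).inv h3).const_mul (2 * c3)).sub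
      (((hasDerivAt_pow 2 s).inv h2).const_mul c4)
  refine H.congr_deriv ?_
  field_simp
  ring
theorem stmt_15 (c1 c2 c3 c4 γ : ℝ) (hγ : 0 < γ) :
    let ψ : ℝ × ℝ × ℝ → ℝ := fun p =>
      c1 + c2 * (p.1 ^ 2 + p.2.1 ^ 2)
        + c3 * Real.log (p.1 ^ 2 + p.2.1 ^ 2)
        + c4 * (p.1 ^ 2 + p.2.1 ^ 2) * (Real.log (p.1 ^ 2 + p.2.1 ^ 2) - 1)
        + (p.1 ^ 2 + p.2.1 ^ 2) ^ 2 / (32 * γ)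
        + p.2.2 / 2 * (p.1 ^ 2 + p.2.1 ^ 2)
    ∀ p : ℝ × ℝ × ℝ, (p.1, p.2.1) ≠ (0, 0) →
      Dx (Dx (Dt ψ)) p + Dy (Dy (Dt ψ)) p
        + Dx ψ p * (Dx (Dx (Dy ψ)) p + Dy (Dy (Dy ψ)) p)
        - Dy ψ p * (Dx (Dx (Dx ψ)) p + Dx (Dy (Dy ψ)) p)
        - γ * (Dx (Dx (Dx (Dx ψ))) p + 2 * Dx (Dx (Dy (Dy ψ))) p
            + Dy (Dy (Dy (Dy ψ))) p) = 0 := by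
  intro ψ p hp
  have hr : p.1 ^ 2 + p.2.1 ^ 2 ≠ 0 := by
    have h1 : p.1 ≠ 0 ∨ p.2.1 ≠ 0 := by
      by_contra h; push_neg at h; exact hp (by rw [h.1, h.2])
    rcases h1 with h | h
    · positivity
    · positivity
  -- first derivatives of ψ
  have hψ : ∀ q : ℝ × ℝ × ℝ, q.1 ^ 2 + q.2.1 ^ 2 ≠ 0 → HasFDerivAt ψ
      (Lmk (2 * q.1 * auxA c2 c3 c4 γ (q.1 ^ 2 + q.2.1 ^ 2) + q.2.2 * q.1)
           (2 * q.2.1 * auxA c2 c3 c4 γ (q.1 ^ 2 + q.2.1 ^ 2) + q.2.2 * q.2.1)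
           ((q.1 ^ 2 + q.2.1 ^ 2) / 2)) q := by
    intro q hq
    have h1 := masterND 0 0 0 (hasDerivAt_auxG0 c1 c2 c3 c4 γ hq)
    have h2 := masterND 0 0 1 ((hasDerivAt_id (q.1 ^ 2 + q.2.1 ^ 2)).div_const 2)
    refine (hasFDerivAt_congrU (h1.add h2) ?_).congr_fderiv ?_
    · intro w
      show _ = c1 + c2 * (w.1 ^ 2 + w.2.1 ^ 2)
        + c3 * Real.log (w.1 ^ 2 + w.2.1 ^ 2)
        + c4 * (w.1 ^ 2 + w.2.1 ^ 2) * (Real.log (w.1 ^ 2 + w.2.1 ^ 2) - 1)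
        + (w.1 ^ 2 + w.2.1 ^ 2) ^ 2 / (32 * γ)
        + w.2.2 / 2 * (w.1 ^ 2 + w.2.1 ^ 2)
      simp only [id_eq, Pi.add_apply]
      ring
    · refine ContinuousLinearMap.ext fun w => ?_
      simp only [ContinuousLinearMap.add_apply, Lmk_apply, id_eq]
      push_cast
      ring
  have hG1 : ∀ q : ℝ × ℝ × ℝ, q.1 ^ 2 + q.2.1 ^ 2 ≠ 0 → HasFDerivAt
      (fun q : ℝ × ℝ × ℝ => (q.1 ^ 2 + q.2.1 ^ 2) / 2) (Lmk q.1 q.2.1 0) q := by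
    intro q hq
    have h1 := masterND 0 0 0 ((hasDerivAt_id (q.1 ^ 2 + q.2.1 ^ 2)).div_const 2)
    refine (hasFDerivAt_congrU h1 ?_).congr_fderiv ?_
    · intro w; simp only [id_eq]; ring
    · refine ContinuousLinearMap.ext fun w => ?_
      simp only [Lmk_apply, id_eq]; push_cast; ring
  have hX : ∀ q : ℝ × ℝ × ℝ, q.1 ^ 2 + q.2.1 ^ 2 ≠ 0 → HasFDerivAt
      (fun q : ℝ × ℝ × ℝ => q.1) (Lmk 1 0 0) q := by
    intro q hq
    have h1 := masterND 1 0 0 (hasDerivAt_const (q.1 ^ 2 + q.2.1 ^ 2) (1 : ℝ))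
    refine (hasFDerivAt_congrU h1 ?_).congr_fderiv ?_
    · intro w; ring
    · refine ContinuousLinearMap.ext fun w => ?_
      simp only [Lmk_apply]; push_cast; ring
  have hY : ∀ q : ℝ × ℝ × ℝ, q.1 ^ 2 + q.2.1 ^ 2 ≠ 0 → HasFDerivAt
      (fun q : ℝ × ℝ × ℝ => q.2.1) (Lmk 0 1 0) q := by
    intro q hq
    have h1 := masterND 0 1 0 (hasDerivAt_const (q.1 ^ 2 + q.2.1 ^ 2) (1 : ℝ))
    refine (hasFDerivAt_congrU h1 ?_).congr_fderiv ?_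
    · intro w; ring
    · refine ContinuousLinearMap.ext fun w => ?_
      simp only [Lmk_apply]; push_cast; ring
  have hF1 : ∀ q : ℝ × ℝ × ℝ, q.1 ^ 2 + q.2.1 ^ 2 ≠ 0 → HasFDerivAt
      (fun q : ℝ × ℝ × ℝ => 2 * q.1 * auxA c2 c3 c4 γ (q.1 ^ 2 + q.2.1 ^ 2) + q.2.2 * q.1)
      (Lmk (2 * auxA c2 c3 c4 γ (q.1 ^ 2 + q.2.1 ^ 2)
              + 4 * q.1 ^ 2 * auxB c3 c4 γ (q.1 ^ 2 + q.2.1 ^ 2) + q.2.2)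
           (4 * q.1 * q.2.1 * auxB c3 c4 γ (q.1 ^ 2 + q.2.1 ^ 2))
           q.1) q := by
    intro q hq
    have h1 := masterND 1 0 0 ((hasDerivAt_auxA c2 c3 c4 γ hq).const_mul 2)
    have h2 := masterND 1 0 1 (hasDerivAt_const (q.1 ^ 2 + q.2.1 ^ 2) (1 : ℝ))
    refine (hasFDerivAt_congrU (h1.add h2) ?_).congr_fderiv ?_
    · intro w; simp only [Pi.add_apply]; ring
    · refine ContinuousLinearMap.ext fun w => ?_
      simp only [ContinuousLinearMap.add_apply, Lmk_apply]; push_cast; ring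
  have hF2 : ∀ q : ℝ × ℝ × ℝ, q.1 ^ 2 + q.2.1 ^ 2 ≠ 0 → HasFDerivAt
      (fun q : ℝ × ℝ × ℝ => 2 * q.2.1 * auxA c2 c3 c4 γ (q.1 ^ 2 + q.2.1 ^ 2) + q.2.2 * q.2.1)
      (Lmk (4 * q.1 * q.2.1 * auxB c3 c4 γ (q.1 ^ 2 + q.2.1 ^ 2))
           (2 * auxA c2 c3 c4 γ (q.1 ^ 2 + q.2.1 ^ 2)
              + 4 * q.2.1 ^ 2 * auxB c3 c4 γ (q.1 ^ 2 + q.2.1 ^ 2) + q.2.2)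
           q.2.1) q := by
    intro q hq
    have h1 := masterND 0 1 0 ((hasDerivAt_auxA c2 c3 c4 γ hq).const_mul 2)
    have h2 := masterND 0 1 1 (hasDerivAt_const (q.1 ^ 2 + q.2.1 ^ 2) (1 : ℝ))
    refine (hasFDerivAt_congrU (h1.add h2) ?_).congr_fderiv ?_
    · intro w; simp only [Pi.add_apply]; ring
    · refine ContinuousLinearMap.ext fun w => ?_
      simp only [ContinuousLinearMap.add_apply, Lmk_apply]; push_cast; ring
  have hF3 : ∀ q : ℝ × ℝ × ℝ, q.1 ^ 2 + q.2.1 ^ 2 ≠ 0 → HasFDerivAt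
      (fun q : ℝ × ℝ × ℝ => 4 * q.1 * q.2.1 * auxB c3 c4 γ (q.1 ^ 2 + q.2.1 ^ 2))
      (Lmk (4 * q.2.1 * auxB c3 c4 γ (q.1 ^ 2 + q.2.1 ^ 2)
              + 8 * q.1 ^ 2 * q.2.1 * auxC c3 c4 (q.1 ^ 2 + q.2.1 ^ 2))
           (4 * q.1 * auxB c3 c4 γ (q.1 ^ 2 + q.2.1 ^ 2)
              + 8 * q.1 * q.2.1 ^ 2 * auxC c3 c4 (q.1 ^ 2 + q.2.1 ^ 2))
           0) q := by
    intro q hq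
    have h1 := masterND 1 1 0 ((hasDerivAt_auxB c3 c4 γ hq).const_mul 4)
    refine (hasFDerivAt_congrU h1 ?_).congr_fderiv ?_
    · intro w; ring
    · refine ContinuousLinearMap.ext fun w => ?_
      simp only [Lmk_apply]; push_cast; ring
  have hF4 : ∀ q : ℝ × ℝ × ℝ, q.1 ^ 2 + q.2.1 ^ 2 ≠ 0 → HasFDerivAt
      (fun q : ℝ × ℝ × ℝ => 2 * auxA c2 c3 c4 γ (q.1 ^ 2 + q.2.1 ^ 2)
          + 4 * q.2.1 ^ 2 * auxB c3 c4 γ (q.1 ^ 2 + q.2.1 ^ 2) + q.2.2)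
      (Lmk (4 * q.1 * auxB c3 c4 γ (q.1 ^ 2 + q.2.1 ^ 2)
              + 8 * q.1 * q.2.1 ^ 2 * auxC c3 c4 (q.1 ^ 2 + q.2.1 ^ 2))
           (12 * q.2.1 * auxB c3 c4 γ (q.1 ^ 2 + q.2.1 ^ 2)
              + 8 * q.2.1 ^ 3 * auxC c3 c4 (q.1 ^ 2 + q.2.1 ^ 2))
           1) q := by
    intro q hq
    have h1 := masterND 0 0 0 ((hasDerivAt_auxA c2 c3 c4 γ hq).const_mul 2)
    have h2 := masterND 0 2 0 ((hasDerivAt_auxB c3 c4 γ hq).const_mul 4)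
    have h3 := masterND 0 0 1 (hasDerivAt_const (q.1 ^ 2 + q.2.1 ^ 2) (1 : ℝ))
    refine (hasFDerivAt_congrU ((h1.add h2).add h3) ?_).congr_fderiv ?_
    · intro w; simp only [Pi.add_apply]; ring
    · refine ContinuousLinearMap.ext fun w => ?_
      simp only [ContinuousLinearMap.add_apply, Lmk_apply]; push_cast; ring
  have hF5 : ∀ q : ℝ × ℝ × ℝ, q.1 ^ 2 + q.2.1 ^ 2 ≠ 0 → HasFDerivAt
      (fun q : ℝ × ℝ × ℝ => 2 * auxA c2 c3 c4 γ (q.1 ^ 2 + q.2.1 ^ 2)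
          + 4 * q.1 ^ 2 * auxB c3 c4 γ (q.1 ^ 2 + q.2.1 ^ 2) + q.2.2)
      (Lmk (12 * q.1 * auxB c3 c4 γ (q.1 ^ 2 + q.2.1 ^ 2)
              + 8 * q.1 ^ 3 * auxC c3 c4 (q.1 ^ 2 + q.2.1 ^ 2))
           (4 * q.2.1 * auxB c3 c4 γ (q.1 ^ 2 + q.2.1 ^ 2)
              + 8 * q.1 ^ 2 * q.2.1 * auxC c3 c4 (q.1 ^ 2 + q.2.1 ^ 2))
           1) q := by
    intro q hq
    have h1 := masterND 0 0 0 ((hasDerivAt_auxA c2 c3 c4 γ hq).const_mul 2)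
    have h2 := masterND 2 0 0 ((hasDerivAt_auxB c3 c4 γ hq).const_mul 4)
    have h3 := masterND 0 0 1 (hasDerivAt_const (q.1 ^ 2 + q.2.1 ^ 2) (1 : ℝ))
    refine (hasFDerivAt_congrU ((h1.add h2).add h3) ?_).congr_fderiv ?_
    · intro w; simp only [Pi.add_apply]; ring
    · refine ContinuousLinearMap.ext fun w => ?_
      simp only [ContinuousLinearMap.add_apply, Lmk_apply]; push_cast; ring
  have hF6 : ∀ q : ℝ × ℝ × ℝ, q.1 ^ 2 + q.2.1 ^ 2 ≠ 0 → HasFDerivAt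
      (fun q : ℝ × ℝ × ℝ => 12 * q.1 * auxB c3 c4 γ (q.1 ^ 2 + q.2.1 ^ 2)
          + 8 * q.1 ^ 3 * auxC c3 c4 (q.1 ^ 2 + q.2.1 ^ 2))
      (Lmk (12 * auxB c3 c4 γ (q.1 ^ 2 + q.2.1 ^ 2)
              + 48 * q.1 ^ 2 * auxC c3 c4 (q.1 ^ 2 + q.2.1 ^ 2)
              + 16 * q.1 ^ 4 * auxD c3 c4 (q.1 ^ 2 + q.2.1 ^ 2))
           (24 * q.1 * q.2.1 * auxC c3 c4 (q.1 ^ 2 + q.2.1 ^ 2)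
              + 16 * q.1 ^ 3 * q.2.1 * auxD c3 c4 (q.1 ^ 2 + q.2.1 ^ 2))
           0) q := by
    intro q hq
    have h1 := masterND 1 0 0 ((hasDerivAt_auxB c3 c4 γ hq).const_mul 12)
    have h2 := masterND 3 0 0 ((hasDerivAt_auxC c3 c4 hq).const_mul 8)
    refine (hasFDerivAt_congrU (h1.add h2) ?_).congr_fderiv ?_
    · intro w; simp only [Pi.add_apply]; ring
    · refine ContinuousLinearMap.ext fun w => ?_
      simp only [ContinuousLinearMap.add_apply, Lmk_apply]; push_cast; ring
  have hF7 : ∀ q : ℝ × ℝ × ℝ, q.1 ^ 2 + q.2.1 ^ 2 ≠ 0 → HasFDerivAt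
      (fun q : ℝ × ℝ × ℝ => 4 * q.1 * auxB c3 c4 γ (q.1 ^ 2 + q.2.1 ^ 2)
          + 8 * q.1 * q.2.1 ^ 2 * auxC c3 c4 (q.1 ^ 2 + q.2.1 ^ 2))
      (Lmk (4 * auxB c3 c4 γ (q.1 ^ 2 + q.2.1 ^ 2)
              + 8 * q.1 ^ 2 * auxC c3 c4 (q.1 ^ 2 + q.2.1 ^ 2)
              + 8 * q.2.1 ^ 2 * auxC c3 c4 (q.1 ^ 2 + q.2.1 ^ 2)
              + 16 * q.1 ^ 2 * q.2.1 ^ 2 * auxD c3 c4 (q.1 ^ 2 + q.2.1 ^ 2))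
           (24 * q.1 * q.2.1 * auxC c3 c4 (q.1 ^ 2 + q.2.1 ^ 2)
              + 16 * q.1 * q.2.1 ^ 3 * auxD c3 c4 (q.1 ^ 2 + q.2.1 ^ 2))
           0) q := by
    intro q hq
    have h1 := masterND 1 0 0 ((hasDerivAt_auxB c3 c4 γ hq).const_mul 4)
    have h2 := masterND 1 2 0 ((hasDerivAt_auxC c3 c4 hq).const_mul 8)
    refine (hasFDerivAt_congrU (h1.add h2) ?_).congr_fderiv ?_
    · intro w; simp only [Pi.add_apply]; ring
    · refine ContinuousLinearMap.ext fun w => ?_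
      simp only [ContinuousLinearMap.add_apply, Lmk_apply]; push_cast; ring
  have hF8 : ∀ q : ℝ × ℝ × ℝ, q.1 ^ 2 + q.2.1 ^ 2 ≠ 0 → HasFDerivAt
      (fun q : ℝ × ℝ × ℝ => 12 * q.2.1 * auxB c3 c4 γ (q.1 ^ 2 + q.2.1 ^ 2)
          + 8 * q.2.1 ^ 3 * auxC c3 c4 (q.1 ^ 2 + q.2.1 ^ 2))
      (Lmk (24 * q.1 * q.2.1 * auxC c3 c4 (q.1 ^ 2 + q.2.1 ^ 2)
              + 16 * q.1 * q.2.1 ^ 3 * auxD c3 c4 (q.1 ^ 2 + q.2.1 ^ 2))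
           (12 * auxB c3 c4 γ (q.1 ^ 2 + q.2.1 ^ 2)
              + 48 * q.2.1 ^ 2 * auxC c3 c4 (q.1 ^ 2 + q.2.1 ^ 2)
              + 16 * q.2.1 ^ 4 * auxD c3 c4 (q.1 ^ 2 + q.2.1 ^ 2))
           0) q := by
    intro q hq
    have h1 := masterND 0 1 0 ((hasDerivAt_auxB c3 c4 γ hq).const_mul 12)
    have h2 := masterND 0 3 0 ((hasDerivAt_auxC c3 c4 hq).const_mul 8)
    refine (hasFDerivAt_congrU (h1.add h2) ?_).congr_fderiv ?_
    · intro w; simp only [Pi.add_apply]; ring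
    · refine ContinuousLinearMap.ext fun w => ?_
      simp only [ContinuousLinearMap.add_apply, Lmk_apply]; push_cast; ring
  -- the chain of partial derivatives
  have dψx : ∀ q : ℝ × ℝ × ℝ, q.1 ^ 2 + q.2.1 ^ 2 ≠ 0 →
      Dx ψ q = 2 * q.1 * auxA c2 c3 c4 γ (q.1 ^ 2 + q.2.1 ^ 2) + q.2.2 * q.1 :=
    fun q hq => Dx_eq (hψ q hq)
  have dψy : ∀ q : ℝ × ℝ × ℝ, q.1 ^ 2 + q.2.1 ^ 2 ≠ 0 →
      Dy ψ q = 2 * q.2.1 * auxA c2 c3 c4 γ (q.1 ^ 2 + q.2.1 ^ 2) + q.2.2 * q.2.1 :=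
    fun q hq => Dy_eq (hψ q hq)
  have dψt : ∀ q : ℝ × ℝ × ℝ, q.1 ^ 2 + q.2.1 ^ 2 ≠ 0 →
      Dt ψ q = (q.1 ^ 2 + q.2.1 ^ 2) / 2 :=
    fun q hq => Dt_eq (hψ q hq)
  have t1 : ∀ q : ℝ × ℝ × ℝ, q.1 ^ 2 + q.2.1 ^ 2 ≠ 0 → Dx (Dt ψ) q = q.1 :=
    fun q hq => (Dx_congrU dψt hq).trans (Dx_eq (hG1 q hq))
  have t2 : ∀ q : ℝ × ℝ × ℝ, q.1 ^ 2 + q.2.1 ^ 2 ≠ 0 → Dy (Dt ψ) q = q.2.1 :=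
    fun q hq => (Dy_congrU dψt hq).trans (Dy_eq (hG1 q hq))
  have E1 : Dx (Dx (Dt ψ)) p = 1 := (Dx_congrU t1 hr).trans (Dx_eq (hX p hr))
  have E2 : Dy (Dy (Dt ψ)) p = 1 := (Dy_congrU t2 hr).trans (Dy_eq (hY p hr))
  have u1 : ∀ q : ℝ × ℝ × ℝ, q.1 ^ 2 + q.2.1 ^ 2 ≠ 0 →
      Dy (Dy ψ) q = 2 * auxA c2 c3 c4 γ (q.1 ^ 2 + q.2.1 ^ 2)
          + 4 * q.2.1 ^ 2 * auxB c3 c4 γ (q.1 ^ 2 + q.2.1 ^ 2) + q.2.2 :=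
    fun q hq => (Dy_congrU dψy hq).trans (Dy_eq (hF2 q hq))
  have u2 : ∀ q : ℝ × ℝ × ℝ, q.1 ^ 2 + q.2.1 ^ 2 ≠ 0 →
      Dx (Dy ψ) q = 4 * q.1 * q.2.1 * auxB c3 c4 γ (q.1 ^ 2 + q.2.1 ^ 2) :=
    fun q hq => (Dx_congrU dψy hq).trans (Dx_eq (hF2 q hq))
  have E4 : Dx (Dx (Dy ψ)) p = 4 * p.2.1 * auxB c3 c4 γ (p.1 ^ 2 + p.2.1 ^ 2)
      + 8 * p.1 ^ 2 * p.2.1 * auxC c3 c4 (p.1 ^ 2 + p.2.1 ^ 2) :=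
    (Dx_congrU u2 hr).trans (Dx_eq (hF3 p hr))
  have E5 : Dy (Dy (Dy ψ)) p = 12 * p.2.1 * auxB c3 c4 γ (p.1 ^ 2 + p.2.1 ^ 2)
      + 8 * p.2.1 ^ 3 * auxC c3 c4 (p.1 ^ 2 + p.2.1 ^ 2) :=
    (Dy_congrU u1 hr).trans (Dy_eq (hF4 p hr))
  have v1 : ∀ q : ℝ × ℝ × ℝ, q.1 ^ 2 + q.2.1 ^ 2 ≠ 0 →
      Dx (Dx ψ) q = 2 * auxA c2 c3 c4 γ (q.1 ^ 2 + q.2.1 ^ 2)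
          + 4 * q.1 ^ 2 * auxB c3 c4 γ (q.1 ^ 2 + q.2.1 ^ 2) + q.2.2 :=
    fun q hq => (Dx_congrU dψx hq).trans (Dx_eq (hF1 q hq))
  have v2 : ∀ q : ℝ × ℝ × ℝ, q.1 ^ 2 + q.2.1 ^ 2 ≠ 0 →
      Dx (Dx (Dx ψ)) q = 12 * q.1 * auxB c3 c4 γ (q.1 ^ 2 + q.2.1 ^ 2)
          + 8 * q.1 ^ 3 * auxC c3 c4 (q.1 ^ 2 + q.2.1 ^ 2) :=
    fun q hq => (Dx_congrU v1 hq).trans (Dx_eq (hF5 q hq))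
  have E7 : Dx (Dx (Dx ψ)) p = 12 * p.1 * auxB c3 c4 γ (p.1 ^ 2 + p.2.1 ^ 2)
      + 8 * p.1 ^ 3 * auxC c3 c4 (p.1 ^ 2 + p.2.1 ^ 2) := v2 p hr
  have w2 : ∀ q : ℝ × ℝ × ℝ, q.1 ^ 2 + q.2.1 ^ 2 ≠ 0 →
      Dx (Dy (Dy ψ)) q = 4 * q.1 * auxB c3 c4 γ (q.1 ^ 2 + q.2.1 ^ 2)
          + 8 * q.1 * q.2.1 ^ 2 * auxC c3 c4 (q.1 ^ 2 + q.2.1 ^ 2) :=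
    fun q hq => (Dx_congrU u1 hq).trans (Dx_eq (hF4 q hq))
  have E8 : Dx (Dy (Dy ψ)) p = 4 * p.1 * auxB c3 c4 γ (p.1 ^ 2 + p.2.1 ^ 2)
      + 8 * p.1 * p.2.1 ^ 2 * auxC c3 c4 (p.1 ^ 2 + p.2.1 ^ 2) := w2 p hr
  have E9 : Dx (Dx (Dx (Dx ψ))) p = 12 * auxB c3 c4 γ (p.1 ^ 2 + p.2.1 ^ 2)
      + 48 * p.1 ^ 2 * auxC c3 c4 (p.1 ^ 2 + p.2.1 ^ 2)
      + 16 * p.1 ^ 4 * auxD c3 c4 (p.1 ^ 2 + p.2.1 ^ 2) :=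
    (Dx_congrU v2 hr).trans (Dx_eq (hF6 p hr))
  have E10 : Dx (Dx (Dy (Dy ψ))) p = 4 * auxB c3 c4 γ (p.1 ^ 2 + p.2.1 ^ 2)
      + 8 * p.1 ^ 2 * auxC c3 c4 (p.1 ^ 2 + p.2.1 ^ 2)
      + 8 * p.2.1 ^ 2 * auxC c3 c4 (p.1 ^ 2 + p.2.1 ^ 2)
      + 16 * p.1 ^ 2 * p.2.1 ^ 2 * auxD c3 c4 (p.1 ^ 2 + p.2.1 ^ 2) :=
    (Dx_congrU w2 hr).trans (Dx_eq (hF7 p hr))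
  have w3 : ∀ q : ℝ × ℝ × ℝ, q.1 ^ 2 + q.2.1 ^ 2 ≠ 0 →
      Dy (Dy (Dy ψ)) q = 12 * q.2.1 * auxB c3 c4 γ (q.1 ^ 2 + q.2.1 ^ 2)
          + 8 * q.2.1 ^ 3 * auxC c3 c4 (q.1 ^ 2 + q.2.1 ^ 2) :=
    fun q hq => (Dy_congrU u1 hq).trans (Dy_eq (hF4 q hq))
  have E11 : Dy (Dy (Dy (Dy ψ))) p = 12 * auxB c3 c4 γ (p.1 ^ 2 + p.2.1 ^ 2)
      + 48 * p.2.1 ^ 2 * auxC c3 c4 (p.1 ^ 2 + p.2.1 ^ 2)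
      + 16 * p.2.1 ^ 4 * auxD c3 c4 (p.1 ^ 2 + p.2.1 ^ 2) :=
    (Dy_congrU w3 hr).trans (Dy_eq (hF8 p hr))
  rw [E1, E2, dψx p hr, dψy p hr, E4, E5, E7, E8, E9, E10, E11]
  have key : γ * (32 * auxB c3 c4 γ (p.1 ^ 2 + p.2.1 ^ 2)
      + 64 * (p.1 ^ 2 + p.2.1 ^ 2) * auxC c3 c4 (p.1 ^ 2 + p.2.1 ^ 2)
      + 16 * (p.1 ^ 2 + p.2.1 ^ 2) ^ 2 * auxD c3 c4 (p.1 ^ 2 + p.2.1 ^ 2)) = 2 := by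
    unfold auxB auxC auxD
    field_simp
    ring
  linear_combination -key
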